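/- For every m ∈ ℕ and r ∈ ℝ there exists a constant C > 0 such that for every u ∈ C^∞(ℝ, ℂ) and every η ∈ ℝ: | D^m( ⟨η⟩^r u )(η) − ⟨η⟩^r · (D^m u)(η) | ≤ C · ⟨η⟩^r · Σ_{l=0}^{m} | (D^l u)(η) |, where D is the operator (D u)(η) = η · u′(η). -/

import Mathlib

open Polynomial Finset

/-- The Japanese bracket `⟨η⟩ = (1+η²)^{1/2}`. -/
noncomputable def jb (t : ℝ) : ℝ := Real.sqrt (1 + t ^ 2)

/-- The first-order operator `(D u)(η) = η · u′(η)`. -/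
noncomputable def Dop (u : ℝ → ℂ) : ℝ → ℂ := fun η => (η : ℂ) * deriv u η

noncomputable def wt (r η : ℝ) : ℝ := (1 + η ^ 2) ^ (r / 2)

noncomputable def ph (η : ℝ) : ℝ := η ^ 2 / (1 + η ^ 2)

lemma one_add_sq_pos (η : ℝ) : 0 < 1 + η ^ 2 := by positivity

lemma wt_pos (r η : ℝ) : 0 < wt r η := Real.rpow_pos_of_pos (one_add_sq_pos η) _

lemma jb_rpow (r t : ℝ) : jb t ^ r = wt r t := by
  rw [jb, Real.sqrt_eq_rpow, wt, ← Real.rpow_mul (one_add_sq_pos t).le]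
  ring_nf

lemma ph_nonneg (η : ℝ) : 0 ≤ ph η := by
  have := one_add_sq_pos η; unfold ph; positivity

lemma ph_le_one (η : ℝ) : ph η ≤ 1 := by
  rw [ph, div_le_one (one_add_sq_pos η)]; nlinarith [sq_nonneg η]

lemma R1 (η : ℝ) : η * (2 * η / (1 + η ^ 2) ^ 2) = 2 * ph η * (1 - ph η) := by
  have h := (one_add_sq_pos η).ne'
  rw [ph]; field_simp; ring

lemma R2 (r η : ℝ) : η * (r / 2 * (1 + η ^ 2) ^ (r / 2 - 1) * (2 * η)) = r * ph η * wt r η := by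
  have h := one_add_sq_pos η
  rw [Real.rpow_sub h, Real.rpow_one, ph, wt]
  field_simp

lemma hasDerivAt_ph (η : ℝ) : HasDerivAt ph (2 * η / (1 + η ^ 2) ^ 2) η := by
  have h := (one_add_sq_pos η).ne'
  have h1 : HasDerivAt (fun η : ℝ => η ^ 2) (2 * η) η := by simpa using hasDerivAt_pow 2 η
  have h2 : HasDerivAt (fun η : ℝ => 1 + η ^ 2) (2 * η) η := h1.const_add 1
  have := h1.fun_div h2 h
  refine this.congr_deriv ?_
  field_simp; ring

lemma hasDerivAt_wt (r η : ℝ) :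
    HasDerivAt (wt r) (r / 2 * (1 + η ^ 2) ^ (r / 2 - 1) * (2 * η)) η := by
  have h2 : HasDerivAt (fun η : ℝ => 1 + η ^ 2) (2 * η) η := by
    simpa using (hasDerivAt_pow 2 η).const_add 1
  exact (Real.hasDerivAt_rpow_const (Or.inl (one_add_sq_pos η).ne')).comp η h2

lemma contDiff_iter_Dop (u : ℝ → ℂ) (hu : ContDiff ℝ (⊤ : ℕ∞) u) (l : ℕ) :
    ContDiff ℝ (⊤ : ℕ∞) (Dop^[l] u) := by
  induction l with
  | zero => exact hu
  | succ n ih =>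
    rw [Function.iterate_succ_apply']
    have hd : ContDiff ℝ (⊤ : ℕ∞) (deriv (Dop^[n] u)) :=
      ((contDiff_infty_iff_deriv).mp ih).2
    exact (Complex.ofRealCLM.contDiff.mul hd :)

lemma term_hasDerivAt (r : ℝ) (p : Polynomial ℝ) (v : ℝ → ℂ) (hv : Differentiable ℝ v) (η : ℝ) :
    HasDerivAt (fun η => ((p.eval (ph η) : ℝ) : ℂ) * (wt r η : ℂ) * v η)
      (((p.derivative.eval (ph η) * (2 * η / (1 + η ^ 2) ^ 2) : ℝ) : ℂ) * (wt r η : ℂ) * v η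
        + ((p.eval (ph η) : ℝ) : ℂ) * ((r / 2 * (1 + η ^ 2) ^ (r / 2 - 1) * (2 * η) : ℝ) : ℂ) * v η
        + ((p.eval (ph η) : ℝ) : ℂ) * (wt r η : ℂ) * deriv v η) η := by
  have h1 : HasDerivAt (fun η => ((p.eval (ph η) : ℝ) : ℂ))
      ((p.derivative.eval (ph η) * (2 * η / (1 + η ^ 2) ^ 2) : ℝ) : ℂ) η :=
    (((p.hasDerivAt (ph η)).comp η (hasDerivAt_ph η))).ofReal_comp
  have h2 : HasDerivAt (fun η => ((wt r η : ℝ) : ℂ))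
      ((r / 2 * (1 + η ^ 2) ^ (r / 2 - 1) * (2 * η) : ℝ) : ℂ) η := (hasDerivAt_wt r η).ofReal_comp
  have h3 := (hv η).hasDerivAt
  refine ((h1.fun_mul h2).fun_mul h3).congr_deriv ?_
  ring

lemma key_alg' (a b W Pd Pe c1 c2 g h e : ℂ) (h1 : e * c1 = g) (h2 : e * c2 = h * W) :
    e * (Pd * c1 * W * a + Pe * c2 * a + Pe * W * b)
      = (g * Pd + h * Pe) * W * a + Pe * W * (e * b) := by
  linear_combination Pd * W * a * h1 + Pe * a * h2

lemma key_alg (r : ℝ) (p : Polynomial ℝ) (η : ℝ) (a b : ℂ) :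
    (η : ℂ) * (((p.derivative.eval (ph η) * (2 * η / (1 + η ^ 2) ^ 2) : ℝ) : ℂ) * (wt r η : ℂ) * a
        + ((p.eval (ph η) : ℝ) : ℂ) * ((r / 2 * (1 + η ^ 2) ^ (r / 2 - 1) * (2 * η) : ℝ) : ℂ) * a
        + ((p.eval (ph η) : ℝ) : ℂ) * (wt r η : ℂ) * b)
    = ((((C 2 * X * (1 - X)) * p.derivative + C r * X * p).eval (ph η) : ℝ) : ℂ) * (wt r η : ℂ) * a
      + ((p.eval (ph η) : ℝ) : ℂ) * (wt r η : ℂ) * ((η : ℂ) * b) := by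
  have E : ((C 2 * X * (1 - X)) * p.derivative + C r * X * p).eval (ph η)
      = (2 * ph η * (1 - ph η)) * p.derivative.eval (ph η) + (r * ph η) * p.eval (ph η) := by
    simp [eval_add, eval_mul, eval_sub, eval_one, eval_X, eval_C]
  rw [E]
  have F1 : (η : ℂ) * ((2 * η / (1 + η ^ 2) ^ 2 : ℝ) : ℂ) = ((2 * ph η * (1 - ph η) : ℝ) : ℂ) := by
    rw [← Complex.ofReal_mul, R1]
  have F2 : (η : ℂ) * ((r / 2 * (1 + η ^ 2) ^ (r / 2 - 1) * (2 * η) : ℝ) : ℂ)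
      = ((r * ph η : ℝ) : ℂ) * ((wt r η : ℝ) : ℂ) := by
    rw [← Complex.ofReal_mul, R2, Complex.ofReal_mul]
  push_cast at F1 F2 ⊢
  linear_combination (((p.derivative.eval (ph η) : ℝ) : ℂ) * ((wt r η : ℝ) : ℂ) * a) * F1
    + (((p.eval (ph η) : ℝ) : ℂ) * a) * F2

/-- the recursive coefficient polynomials -/
noncomputable def Q (r : ℝ) : ℕ → ℕ → Polynomial ℝ
  | 0, 0 => 1
  | 0, _ + 1 => 0
  | m + 1, l =>
      (C 2 * X * (1 - X)) * (Q r m l).derivative + C r * X * Q r m l +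
        (match l with | 0 => 0 | l + 1 => Q r m l)

noncomputable def Qsh (r : ℝ) (m : ℕ) : ℕ → Polynomial ℝ
  | 0 => 0
  | l + 1 => Q r m l

lemma Q_succ (r : ℝ) (m l : ℕ) :
    Q r (m + 1) l
      = (C 2 * X * (1 - X)) * (Q r m l).derivative + C r * X * Q r m l + Qsh r m l := by
  cases l <;> rfl

lemma Q_zero_of_lt (r : ℝ) : ∀ m l, m < l → Q r m l = 0 := by
  intro m
  induction m with
  | zero => intro l hl; match l, hl with | l + 1, _ => rfl
  | succ n ih =>
    intro l hl
    match l, hl with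
    | l + 1, hl =>
      have h1 : Q r n (l + 1) = 0 := ih _ (by omega)
      have h2 : Q r n l = 0 := ih _ (by omega)
      show (C 2 * X * (1 - X)) * (Q r n (l + 1)).derivative + C r * X * Q r n (l + 1)
          + Q r n l = 0
      rw [h1, h2]; simp

lemma Q_diag (r : ℝ) : ∀ m, Q r m m = 1 := by
  intro m
  induction m with
  | zero => rfl
  | succ n ih =>
    show (C 2 * X * (1 - X)) * (Q r n (n + 1)).derivative + C r * X * Q r n (n + 1)
        + Q r n n = 1
    rw [Q_zero_of_lt r n (n + 1) (by omega), ih]; simp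

lemma key (r : ℝ) (m : ℕ) (u : ℝ → ℂ) (hu : ContDiff ℝ (⊤ : ℕ∞) u) : ∀ η : ℝ,
    Dop^[m] (fun t => ((wt r t : ℝ) : ℂ) * u t) η
      = ∑ l ∈ Finset.range (m + 1),
          (((Q r m l).eval (ph η) : ℝ) : ℂ) * (wt r η : ℂ) * Dop^[l] u η := by
  induction m with
  | zero => intro η; simp [Q]
  | succ n ih =>
    intro η
    rw [Function.iterate_succ_apply']
    have hfun : Dop^[n] (fun t => ((wt r t : ℝ) : ℂ) * u t)
        = fun η => ∑ l ∈ Finset.range (n + 1),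
            (((Q r n l).eval (ph η) : ℝ) : ℂ) * (wt r η : ℂ) * Dop^[l] u η := funext ih
    rw [hfun]
    show (η : ℂ) * deriv (fun η => ∑ l ∈ Finset.range (n + 1),
        (((Q r n l).eval (ph η) : ℝ) : ℂ) * (wt r η : ℂ) * Dop^[l] u η) η = _
    have hder := HasDerivAt.fun_sum (u := Finset.range (n + 1))
      (A' := fun l =>
        ((((Q r n l).derivative.eval (ph η) * (2 * η / (1 + η ^ 2) ^ 2) : ℝ)) : ℂ)
            * (wt r η : ℂ) * Dop^[l] u η
          + (((Q r n l).eval (ph η) : ℝ) : ℂ)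
            * ((r / 2 * (1 + η ^ 2) ^ (r / 2 - 1) * (2 * η) : ℝ) : ℂ) * Dop^[l] u η
          + (((Q r n l).eval (ph η) : ℝ) : ℂ) * (wt r η : ℂ) * deriv (Dop^[l] u) η)
      (fun l _ => term_hasDerivAt r (Q r n l) (Dop^[l] u)
        ((contDiff_iter_Dop u hu l).differentiable (by simp)) η)
    rw [hder.deriv, Finset.mul_sum]
    have hDsucc : ∀ l : ℕ, (η : ℂ) * deriv (Dop^[l] u) η = Dop^[l + 1] u η := by
      intro l; rw [Function.iterate_succ_apply']; rfl
    calc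
      ∑ l ∈ Finset.range (n + 1), (η : ℂ) *
          (((((Q r n l).derivative.eval (ph η) * (2 * η / (1 + η ^ 2) ^ 2) : ℝ)) : ℂ)
              * (wt r η : ℂ) * Dop^[l] u η
            + (((Q r n l).eval (ph η) : ℝ) : ℂ)
              * ((r / 2 * (1 + η ^ 2) ^ (r / 2 - 1) * (2 * η) : ℝ) : ℂ) * Dop^[l] u η
            + (((Q r n l).eval (ph η) : ℝ) : ℂ) * (wt r η : ℂ) * deriv (Dop^[l] u) η)
        = ∑ l ∈ Finset.range (n + 1),
            (((((C 2 * X * (1 - X)) * (Q r n l).derivative + C r * X * Q r n l).eval (ph η) : ℝ) : ℂ)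
                * (wt r η : ℂ) * Dop^[l] u η
              + (((Q r n l).eval (ph η) : ℝ) : ℂ) * (wt r η : ℂ) * Dop^[l + 1] u η) := by
          refine Finset.sum_congr rfl fun l _ => ?_
          rw [key_alg r (Q r n l) η (Dop^[l] u η) (deriv (Dop^[l] u) η), hDsucc l]
      _ = (∑ l ∈ Finset.range (n + 1),
              ((((C 2 * X * (1 - X)) * (Q r n l).derivative + C r * X * Q r n l).eval (ph η) : ℝ) : ℂ)
                * (wt r η : ℂ) * Dop^[l] u η)
            + ∑ l ∈ Finset.range (n + 1),
              (((Q r n l).eval (ph η) : ℝ) : ℂ) * (wt r η : ℂ) * Dop^[l + 1] u η := by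
          rw [Finset.sum_add_distrib]
      _ = ∑ l ∈ Finset.range (n + 1 + 1),
            (((Q r (n + 1) l).eval (ph η) : ℝ) : ℂ) * (wt r η : ℂ) * Dop^[l] u η := by
          have hsplit : ∀ l ∈ Finset.range (n + 2),
              (((Q r (n + 1) l).eval (ph η) : ℝ) : ℂ) * (wt r η : ℂ) * Dop^[l] u η
                = ((((C 2 * X * (1 - X)) * (Q r n l).derivative + C r * X * Q r n l).eval (ph η) : ℝ) : ℂ)
                    * (wt r η : ℂ) * Dop^[l] u η
                  + (((Qsh r n l).eval (ph η) : ℝ) : ℂ) * (wt r η : ℂ) * Dop^[l] u η := by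
            intro l _
            rw [Q_succ, eval_add, Complex.ofReal_add, add_mul, add_mul]
          rw [Finset.sum_congr rfl hsplit, Finset.sum_add_distrib]
          congr 1
          · conv_rhs => rw [Finset.sum_range_succ]
            rw [Q_zero_of_lt r n (n + 1) (by omega)]
            simp
          · conv_rhs => rw [Finset.sum_range_succ']
            simp only [Qsh]
            simp

lemma poly_bound (p : Polynomial ℝ) (x : ℝ) (h0 : 0 ≤ x) (h1 : x ≤ 1) :
    |p.eval x| ≤ ∑ i ∈ Finset.range (p.natDegree + 1), |p.coeff i| := by
  rw [Polynomial.eval_eq_sum_range]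
  refine (Finset.abs_sum_le_sum_abs _ _).trans ?_
  refine Finset.sum_le_sum fun i _ => ?_
  rw [abs_mul]
  have hx : |x ^ i| ≤ 1 := by
    rw [abs_pow]; exact pow_le_one₀ (abs_nonneg x) (by rwa [abs_of_nonneg h0])
  nlinarith [abs_nonneg (p.coeff i), abs_nonneg (x ^ i)]

theorem stmt3 (m : ℕ) (r : ℝ) :
    ∃ C : ℝ, 0 < C ∧
      ∀ u : ℝ → ℂ, ContDiff ℝ (⊤ : ℕ∞) u → ∀ η : ℝ,
        ‖Dop^[m] (fun t => ((jb t ^ r : ℝ) : ℂ) * u t) η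
            - ((jb η ^ r : ℝ) : ℂ) * Dop^[m] u η‖
          ≤ C * jb η ^ r * ∑ l ∈ Finset.range (m + 1), ‖Dop^[l] u η‖ := by
  set B : ℕ → ℝ := fun l => ∑ i ∈ Finset.range ((Q r m l).natDegree + 1), |(Q r m l).coeff i|
    with hB
  have hBnn : ∀ l, 0 ≤ B l := fun l => Finset.sum_nonneg fun i _ => abs_nonneg _
  refine ⟨1 + ∑ l ∈ Finset.range (m + 1), B l, by positivity, fun u hu η => ?_⟩
  set CC : ℝ := 1 + ∑ l ∈ Finset.range (m + 1), B l with hCC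
  have hBleC : ∀ l ∈ Finset.range (m + 1), B l ≤ CC := by
    intro l hl
    have h1 : B l ≤ ∑ l ∈ Finset.range (m + 1), B l :=
      Finset.single_le_sum (fun i _ => hBnn i) hl
    simp only [hCC]; linarith
  have hw : (fun t => ((jb t ^ r : ℝ) : ℂ) * u t) = fun t => ((wt r t : ℝ) : ℂ) * u t :=
    funext fun t => by rw [jb_rpow]
  rw [hw, jb_rpow, key r m u hu η]
  have hsplit : ∑ l ∈ Finset.range (m + 1),
        (((Q r m l).eval (ph η) : ℝ) : ℂ) * (wt r η : ℂ) * Dop^[l] u η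
        - (wt r η : ℂ) * Dop^[m] u η
      = ∑ l ∈ Finset.range m,
        (((Q r m l).eval (ph η) : ℝ) : ℂ) * (wt r η : ℂ) * Dop^[l] u η := by
    rw [Finset.sum_range_succ, Q_diag]
    simp
  rw [hsplit]
  have step1 : ‖∑ l ∈ Finset.range m,
        (((Q r m l).eval (ph η) : ℝ) : ℂ) * (wt r η : ℂ) * Dop^[l] u η‖
      ≤ ∑ l ∈ Finset.range m, B l * (wt r η * ‖Dop^[l] u η‖) := by
    refine (norm_sum_le _ _).trans (Finset.sum_le_sum fun l hl => ?_)
    rw [norm_mul, norm_mul, Complex.norm_real, Complex.norm_real,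
      Real.norm_eq_abs, Real.norm_eq_abs, abs_of_pos (wt_pos r η)]
    have hb : |(Q r m l).eval (ph η)| ≤ B l := poly_bound _ _ (ph_nonneg η) (ph_le_one η)
    have := mul_nonneg (wt_pos r η).le (norm_nonneg (Dop^[l] u η))
    calc |(Q r m l).eval (ph η)| * wt r η * ‖Dop^[l] u η‖
        ≤ B l * wt r η * ‖Dop^[l] u η‖ := by
          exact mul_le_mul_of_nonneg_right
            (mul_le_mul_of_nonneg_right hb (wt_pos r η).le) (norm_nonneg _)
      _ = B l * (wt r η * ‖Dop^[l] u η‖) := by ring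
  refine step1.trans ?_
  have step2 : ∑ l ∈ Finset.range m, B l * (wt r η * ‖Dop^[l] u η‖)
      ≤ ∑ l ∈ Finset.range (m + 1), B l * (wt r η * ‖Dop^[l] u η‖) := by
    rw [Finset.sum_range_succ]
    have : 0 ≤ B m * (wt r η * ‖Dop^[m] u η‖) :=
      mul_nonneg (hBnn m) (mul_nonneg (wt_pos r η).le (norm_nonneg _))
    linarith
  refine step2.trans ?_
  have step3 : ∑ l ∈ Finset.range (m + 1), B l * (wt r η * ‖Dop^[l] u η‖)
      ≤ ∑ l ∈ Finset.range (m + 1), CC * (wt r η * ‖Dop^[l] u η‖) :=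
    Finset.sum_le_sum fun l hl => mul_le_mul_of_nonneg_right (hBleC l hl)
      (mul_nonneg (wt_pos r η).le (norm_nonneg _))
  refine step3.trans (le_of_eq ?_)
  rw [← Finset.mul_sum, ← Finset.mul_sum]
  ring
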